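/- Let (x_i, y_i) ∈ ℝ² × ℝ², i = 1,…,m, be given. Suppose there exist a finite camera P₂ = (A b), non-coincident with P₁ = (I 0), and points w_i ∈ ℝ³ such that P₁ŵ_i is a nonzero scalar multiple of x̂_i and P₂ŵ_i is a nonzero scalar multiple of ŷ_i for all i. Then there exists a real 3×3 matrix F of rank two with ŷ_iᵀ F x̂_i = 0 for all i, together with a nonzero vector e₂ ∈ ker(Fᵀ), such that each (x_i,y_i) is ([e₂]_× F, e₂)-regular; indeed F = [b]_× A and e₂ = b have these properties. -/

import Mathlib

open Matrix

noncomputable section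

/-- For `u ∈ ℝⁿ`, `hat u = (u, 1)ᵀ ∈ ℝⁿ⁺¹`. -/
def hat {n : ℕ} (u : Fin n → ℝ) : Fin (n + 1) → ℝ := Fin.snoc u 1

/-- The 3×4 matrix `(A b)` with left 3×3 block `A` and last column `b`. -/
def cam (A : Matrix (Fin 3) (Fin 3) ℝ) (b : Fin 3 → ℝ) : Matrix (Fin 3) (Fin 4) ℝ :=
  Matrix.of fun i => Fin.snoc (A i) (b i)

/-- The left 3×3 block of a 3×4 matrix. -/
def leftBlock (P : Matrix (Fin 3) (Fin 4) ℝ) : Matrix (Fin 3) (Fin 3) ℝ :=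
  P.submatrix id Fin.castSucc

/-- A (projective) camera is a real 3×4 matrix of rank 3. -/
def IsCamera (P : Matrix (Fin 3) (Fin 4) ℝ) : Prop := P.rank = 3

/-- A finite camera: the left 3×3 block is nonsingular. -/
def IsFiniteCamera (P : Matrix (Fin 3) (Fin 4) ℝ) : Prop := IsUnit (leftBlock P).det

/-- Two cameras are coincident if their camera centers agree up to a nonzero scale;
for rank-3 cameras the center is the (one-dimensional) kernel, so this says the two
cameras share a common nonzero kernel vector. -/
def Coincident (P Q : Matrix (Fin 3) (Fin 4) ℝ) : Prop :=
  ∃ c : Fin 4 → ℝ, c ≠ 0 ∧ P.mulVec c = 0 ∧ Q.mulVec c = 0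

/-- `u` is a nonzero scalar multiple of `v`. -/
def SimEq {n : ℕ} (u v : Fin n → ℝ) : Prop := ∃ c : ℝ, c ≠ 0 ∧ u = c • v

/-- The skew-symmetric matrix `[v]ₓ` with `[v]ₓ w = v × w`. -/
def skew (v : Fin 3 → ℝ) : Matrix (Fin 3) (Fin 3) ℝ :=
  !![0, -v 2, v 1; v 2, 0, -v 0; -v 1, v 0, 0]

/-- `(x, y)` is `(A, b)`-irregular. -/
def Irregular (A : Matrix (Fin 3) (Fin 3) ℝ) (b : Fin 3 → ℝ) (x y : Fin 2 → ℝ) : Prop :=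
  ((skew b * A).mulVec (hat x) = 0 ∧ Matrix.vecMul (hat y) (skew b) ≠ 0) ∨
  ((skew b * A).mulVec (hat x) ≠ 0 ∧ Matrix.vecMul (hat y) (skew b) = 0)

lemma skew_mulVec (v w : Fin 3 → ℝ) : (skew v).mulVec w = v ⨯₃ w := by
  ext i
  fin_cases i <;>
    simp [skew, Matrix.mulVec, dotProduct, Fin.sum_univ_three, cross_apply] <;> ring

lemma vecMul_skew (y v : Fin 3 → ℝ) : Matrix.vecMul y (skew v) = y ⨯₃ v := by
  ext i
  fin_cases i <;>
    simp [skew, Matrix.vecMul, dotProduct, Fin.sum_univ_three, cross_apply] <;> ring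

lemma cross_cross_self_dot (b v : Fin 3 → ℝ) :
    v ⬝ᵥ (b ⨯₃ (b ⨯₃ v)) = -((b ⨯₃ v) ⬝ᵥ (b ⨯₃ v)) := by
  simp [cross_apply, dotProduct, Fin.sum_univ_three]
  ring

lemma cross_cross_eq_zero {b v : Fin 3 → ℝ} (h : b ⨯₃ (b ⨯₃ v) = 0) : b ⨯₃ v = 0 := by
  have h2 := cross_cross_self_dot b v
  rw [h, dotProduct_zero] at h2
  exact dotProduct_self_eq_zero.mp (by linarith)

lemma cross_cross_expand (b v : Fin 3 → ℝ) :
    b ⨯₃ (b ⨯₃ v) = (b ⬝ᵥ v) • b - (b ⬝ᵥ b) • v := by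
  ext i
  fin_cases i <;>
    simp [cross_apply, dotProduct, Fin.sum_univ_three] <;> ring

lemma skew_rank {b : Fin 3 → ℝ} (hb : b ≠ 0) : (skew b).rank = 2 := by
  have hbb : b ⬝ᵥ b ≠ 0 := fun h0 => hb (dotProduct_self_eq_zero.mp h0)
  have hker : LinearMap.ker (skew b).mulVecLin = Submodule.span ℝ {b} := by
    ext v
    simp only [LinearMap.mem_ker, Matrix.mulVecLin_apply, skew_mulVec,
      Submodule.mem_span_singleton]
    constructor
    · intro h
      have h2 := cross_cross_expand b v
      rw [h, map_zero] at h2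
      refine ⟨(b ⬝ᵥ v) / (b ⬝ᵥ b), ?_⟩
      have h3 : (b ⬝ᵥ b) • v = (b ⬝ᵥ v) • b := (sub_eq_zero.mp h2.symm).symm
      rw [div_eq_mul_inv, mul_comm, ← smul_smul, ← h3, smul_smul,
        inv_mul_cancel₀ hbb, one_smul]
    · rintro ⟨c, rfl⟩
      rw [_root_.map_smul, cross_self, smul_zero]
  have hrn := LinearMap.finrank_range_add_finrank_ker (skew b).mulVecLin
  rw [hker, finrank_span_singleton hb] at hrn
  have h3 : Module.finrank ℝ (Fin 3 → ℝ) = 3 := by simp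
  rw [h3] at hrn
  have : (skew b).rank = Module.finrank ℝ (LinearMap.range (skew b).mulVecLin) := rfl
  omega

lemma cam_mulVec (A : Matrix (Fin 3) (Fin 3) ℝ) (b u : Fin 3 → ℝ) :
    (cam A b).mulVec (hat u) = A.mulVec u + b := by
  ext i
  rw [Matrix.mulVec, dotProduct, Fin.sum_univ_castSucc]
  simp [cam, hat, Matrix.mulVec, dotProduct]
  show (Fin.snoc (α := fun _ => ℝ) (A i) (b i) (Fin.last 3) : ℝ) *
      (Fin.snoc (α := fun _ => ℝ) u 1 (Fin.last 3) : ℝ) = b i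
  rw [Fin.snoc_last, Fin.snoc_last, mul_one]

/-- From a finite reconstruction with non-coincident cameras `(I 0)` and `(A b)`, the
matrix `F = [b]ₓ A` is a fundamental matrix, `e₂ = b` is a nonzero left-kernel vector of
`F`, and every point pair is `([e₂]ₓ F, e₂)`-regular. -/
theorem stmt13 (m : ℕ) (x y : Fin m → Fin 2 → ℝ)
    (A : Matrix (Fin 3) (Fin 3) ℝ) (b : Fin 3 → ℝ)
    (hA : IsUnit A.det) (hb : b ≠ 0)
    (w : Fin m → Fin 3 → ℝ)
    (hrec : ∀ i, SimEq ((cam 1 0).mulVec (hat (w i))) (hat (x i)) ∧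
                 SimEq ((cam A b).mulVec (hat (w i))) (hat (y i))) :
    (skew b * A).rank = 2 ∧
    (∀ i, hat (y i) ⬝ᵥ (skew b * A).mulVec (hat (x i)) = 0) ∧
    (skew b * A)ᵀ.mulVec b = 0 ∧
    (∀ i, ¬ Irregular (skew b * (skew b * A)) b (x i) (y i)) := by
  -- per-point data
  have key : ∀ i, ∃ k : ℝ, k ≠ 0 ∧
      (skew b * A).mulVec (hat (x i)) = k • (b ⨯₃ hat (y i)) := by
    intro i
    obtain ⟨⟨c, hc, hx⟩, ⟨d, hd, hy⟩⟩ := hrec i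
    rw [cam_mulVec] at hx hy
    simp only [Matrix.one_mulVec, add_zero] at hx
    -- hx : w i = c • hat (x i), hy : A.mulVec (w i) + b = d • hat (y i)
    refine ⟨c⁻¹ * d, by positivity, ?_⟩
    have hAx : A.mulVec (hat (x i)) = c⁻¹ • (d • hat (y i) - b) := by
      have : A.mulVec (w i) = d • hat (y i) - b := by rw [← hy]; abel
      rw [hx, Matrix.mulVec_smul] at this
      rw [← this, smul_smul, inv_mul_cancel₀ hc, one_smul]
    rw [← Matrix.mulVec_mulVec, hAx, skew_mulVec]
    rw [_root_.map_smul, map_sub, _root_.map_smul, cross_self, sub_zero, smul_smul]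
  refine ⟨?_, ?_, ?_, ?_⟩
  · rw [Matrix.rank_mul_eq_left_of_isUnit_det A (skew b) hA]
    exact skew_rank hb
  · intro i
    obtain ⟨k, hk, hkey⟩ := key i
    rw [hkey, dotProduct_smul, dot_cross_self, smul_zero]
  · rw [Matrix.mulVec_transpose, ← Matrix.vecMul_vecMul, vecMul_skew, cross_self,
      Matrix.zero_vecMul]
  · intro i
    obtain ⟨k, hk, hkey⟩ := key i
    have hM : (skew b * (skew b * (skew b * A))).mulVec (hat (x i)) =
        k • (b ⨯₃ (b ⨯₃ (b ⨯₃ hat (y i)))) := by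
      simp only [← Matrix.mulVec_mulVec, hkey, skew_mulVec, _root_.map_smul]
    have hP : (skew b * (skew b * (skew b * A))).mulVec (hat (x i)) = 0 ↔
        b ⨯₃ hat (y i) = 0 := by
      rw [hM, smul_eq_zero]
      simp only [hk, false_or]
      constructor
      · intro h; exact cross_cross_eq_zero (cross_cross_eq_zero h)
      · intro h; rw [h, map_zero, map_zero]
    have hQ : Matrix.vecMul (hat (y i)) (skew b) = 0 ↔ b ⨯₃ hat (y i) = 0 := by
      rw [vecMul_skew, ← cross_anticomm, neg_eq_zero]
    rintro (⟨h1, h2⟩ | ⟨h1, h2⟩)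
    · exact h2 (hQ.mpr (hP.mp h1))
    · exact h1 (hP.mpr (hQ.mp h2))
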